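/- For 1 ≤ i ≤ n−2, the Demazure operators on P = k[X₁^{±1},...,Xₙ^{±1}] satisfy the braid relation Δᵢ Δ_{i+1} Δᵢ = Δ_{i+1} Δᵢ Δ_{i+1}. -/

import Mathlib

/-- The Laurent monomial `X^v` in `k[X₁^{±1},…,Xₙ^{±1}] = k[Fin n →₀ ℤ]`. -/
noncomputable def mono {k : Type*} [CommRing k] {n : ℕ} (v : Fin n →₀ ℤ) :
    AddMonoidAlgebra k (Fin n →₀ ℤ) :=
  AddMonoidAlgebra.single v 1

/-- The `k`-algebra automorphism of the Laurent polynomial ring interchanging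
the variables `X_a` and `X_b` (induced by swapping exponents). -/
noncomputable def swapVars {k : Type*} [CommRing k] {n : ℕ} (a b : Fin n)
    (f : AddMonoidAlgebra k (Fin n →₀ ℤ)) : AddMonoidAlgebra k (Fin n →₀ ℤ) :=
  AddMonoidAlgebra.mapDomain (Finsupp.equivMapDomain (Equiv.swap a b)) f


/-- Abstract braid relation for Demazure-type operators in a commutative ring. -/
theorem demazure_braid_abstract {R : Type*} [CommRing R] (σ τ : R →+* R)
    (X1 X2 Y1 Y2 : R)
    (hX1Y1 : X1 * Y1 = 1) (hX2Y2 : X2 * Y2 = 1)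
    (hσX1 : σ X1 = Y1) (hσX2 : σ X2 = X1 * X2)
    (hτX1 : τ X1 = X1 * X2) (hτX2 : τ X2 = Y2)
    (hσσ : ∀ x, σ (σ x) = x) (hττ : ∀ x, τ (τ x) = x)
    (hbraid : ∀ x, σ (τ (σ x)) = τ (σ (τ x)))
    (hreg1 : ∀ a b : R, (1 - X1) * a = (1 - X1) * b → a = b)
    (hreg2 : ∀ a b : R, (1 - X2) * a = (1 - X2) * b → a = b)
    (hreg3 : ∀ a b : R, (1 - X1 * X2) * a = (1 - X1 * X2) * b → a = b)
    (D1 D2 : R → R)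
    (hD1 : ∀ f, (1 - X1) * D1 f = f - σ f)
    (hD2 : ∀ f, (1 - X2) * D2 f = f - τ f) :
    ∀ f, D1 (D2 (D1 f)) = D2 (D1 (D2 f)) := by
  have E1σ : ∀ h, (1 - X1) * σ (D1 h) = X1 * h - X1 * σ h := by
    intro h
    have h2 := congrArg σ (hD1 h)
    simp only [map_mul, map_sub, map_one, hσX1, hσσ] at h2
    linear_combination (-X1) * h2 - σ (D1 h) * hX1Y1
  have E1τ : ∀ h, (1 - X1 * X2) * τ (D1 h) = τ h - τ (σ h) := by
    intro h
    have h2 := congrArg τ (hD1 h)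
    simp only [map_mul, map_sub, map_one, hτX1] at h2
    linear_combination h2
  have E1στ : ∀ h, (1 - X2) * σ (τ (D1 h)) = σ (τ h) - σ (τ (σ h)) := by
    intro h
    have h2 := congrArg σ (E1τ h)
    simp only [map_mul, map_sub, map_one, hσX1, hσX2] at h2
    linear_combination h2 + X2 * σ (τ (D1 h)) * hX1Y1
  have E2σ : ∀ h, (1 - X1 * X2) * σ (D2 h) = σ h - σ (τ h) := by
    intro h
    have h2 := congrArg σ (hD2 h)
    simp only [map_mul, map_sub, map_one, hσX2] at h2
    linear_combination h2
  have E2τ : ∀ h, (1 - X2) * τ (D2 h) = X2 * h - X2 * τ h := by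
    intro h
    have h2 := congrArg τ (hD2 h)
    simp only [map_mul, map_sub, map_one, hτX2, hττ] at h2
    linear_combination (-X2) * h2 - τ (D2 h) * hX2Y2
  have E2τσ : ∀ h, (1 - X1) * τ (σ (D2 h)) = τ (σ h) - τ (σ (τ h)) := by
    intro h
    have h2 := congrArg τ (E2σ h)
    simp only [map_mul, map_sub, map_one, hτX1, hτX2] at h2
    linear_combination h2 + X1 * τ (σ (D2 h)) * hX2Y2
  intro f
  have S1 : (1-X1)*(1-X1)*(1-X2)*(1-X1*X2) * D1 (D2 (D1 f))
      = (1-X1*X2)*(f - σ f) - (1-X1)*(τ f - τ (σ f))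
        - X1*(1-X2)*(f - σ f) + (1-X1)*(σ (τ f) - σ (τ (σ f))) := by
    linear_combination (1-X1)*(1-X2)*(1-X1*X2) * hD1 (D2 (D1 f))
      + (1-X1)*(1-X1*X2) * hD2 (D1 f) - (1-X1)*(1-X2) * E2σ (D1 f)
      + (1-X1*X2) * hD1 f - (1-X1) * E1τ f - (1-X2) * E1σ f + (1-X1) * E1στ f
  have S2 : (1-X2)*(1-X2)*(1-X1)*(1-X1*X2) * D2 (D1 (D2 f))
      = (1-X1*X2)*(f - τ f) - (1-X2)*(σ f - σ (τ f))
        - X2*(1-X1)*(f - τ f) + (1-X2)*(τ (σ f) - τ (σ (τ f))) := by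
    linear_combination (1-X1)*(1-X2)*(1-X1*X2) * hD2 (D1 (D2 f))
      + (1-X2)*(1-X1*X2) * hD1 (D2 f) - (1-X1)*(1-X2) * E1τ (D2 f)
      + (1-X1*X2) * hD2 f - (1-X2) * E2σ f - (1-X1) * E2τ f + (1-X2) * E2τσ f
  have key : (1-X1) * ((1-X1) * ((1-X2) * ((1-X2) * ((1-X1*X2) * D1 (D2 (D1 f))))))
      = (1-X1) * ((1-X1) * ((1-X2) * ((1-X2) * ((1-X1*X2) * D2 (D1 (D2 f)))))) := by
    linear_combination (1-X2) * S1 - (1-X1) * S2 - (1-X1)*(1-X2) * hbraid f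
  exact hreg3 _ _ (hreg2 _ _ (hreg2 _ _ (hreg1 _ _ (hreg1 _ _ key))))

section Aux
variable {k : Type*} [CommRing k] {n : ℕ}

lemma amapDomain_comp {M : Type*} [AddMonoid M] (f g : M → M) (x : AddMonoidAlgebra k M) :
    AddMonoidAlgebra.mapDomain (f ∘ g) x
      = AddMonoidAlgebra.mapDomain f (AddMonoidAlgebra.mapDomain g x) := by
  ext1; simp [Finsupp.mapDomain_comp]

lemma amapDomain_id {M : Type*} [AddMonoid M] (x : AddMonoidAlgebra k M) :
    AddMonoidAlgebra.mapDomain id x = x := by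
  ext1; simp

lemma mono_mul (v w : Fin n →₀ ℤ) : (mono v : AddMonoidAlgebra k (Fin n →₀ ℤ)) * mono w = mono (v + w) := by
  simp [mono, AddMonoidAlgebra.single_mul_single]

lemma mono_zero : (mono 0 : AddMonoidAlgebra k (Fin n →₀ ℤ)) = 1 := rfl

lemma swapVars_coe (a b : Fin n) :
    Finsupp.equivMapDomain (M := ℤ) (Equiv.swap a b) = ⇑(Finsupp.domCongr (M := ℤ) (Equiv.swap a b)) := rfl

lemma swapVars_mul (a b : Fin n) (f g : AddMonoidAlgebra k (Fin n →₀ ℤ)) :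
    swapVars a b (f * g) = swapVars a b f * swapVars a b g := by
  rw [swapVars, swapVars, swapVars, swapVars_coe]
  exact AddMonoidAlgebra.mapDomain_mul (Finsupp.domCongr (Equiv.swap a b)) f g

lemma swapVars_one (a b : Fin n) : swapVars (k := k) a b 1 = 1 := by
  rw [swapVars, swapVars_coe]
  exact AddMonoidAlgebra.mapDomain_one (Finsupp.domCongr (Equiv.swap a b))

lemma swapVars_add (a b : Fin n) (f g : AddMonoidAlgebra k (Fin n →₀ ℤ)) :
    swapVars a b (f + g) = swapVars a b f + swapVars a b g := AddMonoidAlgebra.mapDomain_add _ f g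

lemma swapVars_zero (a b : Fin n) : swapVars (k := k) a b 0 = 0 := AddMonoidAlgebra.mapDomain_zero _

lemma swapVars_mono (a b : Fin n) (v : Fin n →₀ ℤ) :
    swapVars (k := k) a b (mono v) = mono (Finsupp.equivMapDomain (Equiv.swap a b) v) :=
  AddMonoidAlgebra.mapDomain_single

/-- `swapVars` bundled as a ring homomorphism. -/
noncomputable def swapVarsHom (k : Type*) [CommRing k] {n : ℕ} (a b : Fin n) :
    AddMonoidAlgebra k (Fin n →₀ ℤ) →+* AddMonoidAlgebra k (Fin n →₀ ℤ) where
  toFun := swapVars a b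
  map_one' := swapVars_one a b
  map_mul' := swapVars_mul a b
  map_zero' := swapVars_zero a b
  map_add' := swapVars_add a b

lemma swapVars_swapVars (a b : Fin n) (f : AddMonoidAlgebra k (Fin n →₀ ℤ)) :
    swapVars a b (swapVars a b f) = f := by
  rw [swapVars, swapVars, ← amapDomain_comp]
  have : (Finsupp.equivMapDomain (M := ℤ) (Equiv.swap a b)) ∘
      (Finsupp.equivMapDomain (Equiv.swap a b)) = id := by
    funext x
    simp only [Function.comp_apply, ← Finsupp.equivMapDomain_trans, Equiv.swap_swap,
      Finsupp.equivMapDomain_refl, id_eq]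
  rw [this, amapDomain_id]

lemma swapVars_braid {p q r : Fin n} (hpq : p ≠ q) (hqr : q ≠ r) (hpr : p ≠ r)
    (f : AddMonoidAlgebra k (Fin n →₀ ℤ)) :
    swapVars p q (swapVars q r (swapVars p q f)) = swapVars q r (swapVars p q (swapVars q r f)) := by
  have hfun : ∀ x : Fin n, Equiv.swap p q (Equiv.swap q r (Equiv.swap p q x))
      = Equiv.swap q r (Equiv.swap p q (Equiv.swap q r x)) := by
    intro x
    have s1 : Equiv.swap p q r = r := Equiv.swap_apply_of_ne_of_ne (Ne.symm hpr) (Ne.symm hqr)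
    have s2 : Equiv.swap q r p = p := Equiv.swap_apply_of_ne_of_ne hpq hpr
    by_cases h1 : x = p <;> by_cases h2 : x = q <;> by_cases h3 : x = r <;>
      simp_all [Equiv.swap_apply_of_ne_of_ne, Equiv.swap_apply_left, Equiv.swap_apply_right]
  have heq : ((Equiv.swap p q).trans (Equiv.swap q r)).trans (Equiv.swap p q)
      = ((Equiv.swap q r).trans (Equiv.swap p q)).trans (Equiv.swap q r) :=
    Equiv.ext hfun
  simp only [swapVars, ← amapDomain_comp]
  congr 1
  funext x
  simp only [Function.comp_apply, ← Finsupp.equivMapDomain_trans]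
  rw [heq]

/-- `1 - X^v` is a regular element when `v ≠ 0`. -/
lemma one_sub_mono_regular {v : Fin n →₀ ℤ} (hv : v ≠ 0)
    (a b : AddMonoidAlgebra k (Fin n →₀ ℤ))
    (hab : (1 - mono v) * a = (1 - mono v) * b) : a = b := by
  by_contra hne
  have hc : a - b ≠ 0 := sub_ne_zero.2 hne
  have hmc : mono (k := k) v * (a - b) = a - b := by linear_combination -hab
  have step : ∀ x, (a - b).coeff (-v + x) = (a - b).coeff x := by
    intro x
    have h1 : (mono (k := k) v * (a - b)).coeff x = (a - b).coeff x := by rw [hmc]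
    rw [mono, AddMonoidAlgebra.coeff_single_mul_apply] at h1
    simpa using h1
  have key : ∀ (m : ℕ) (x), (a - b).coeff (-(m • v) + x) = (a - b).coeff x := by
    intro m
    induction m with
    | zero => simp
    | succ m ih =>
      intro x
      have h2 : -((m + 1) • v) + x = -v + (-(m • v) + x) := by
        rw [succ_nsmul]; abel
      rw [h2, step, ih]
  obtain ⟨x, hx⟩ := Finsupp.ne_iff.1 (mt AddMonoidAlgebra.coeff_eq_zero.1 hc)
  simp only [Finsupp.coe_zero, Pi.zero_apply] at hx
  obtain ⟨j, hj⟩ := Finsupp.ne_iff.1 hv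
  simp only [Finsupp.coe_zero, Pi.zero_apply] at hj
  have hinj : Function.Injective (fun m : ℕ => -(m • v) + x) := by
    intro m m' h
    simp only [add_left_inj, neg_inj] at h
    have h3 : (m • v) j = (m' • v) j := by rw [h]
    simp only [Finsupp.smul_apply, smul_eq_mul, nsmul_eq_mul] at h3
    exact_mod_cast mul_right_cancel₀ hj h3
  have hmem : ∀ m : ℕ, -(m • v) + x ∈ ((a - b).coeff.support : Set (Fin n →₀ ℤ)) := by
    intro m
    simp only [Finset.mem_coe, Finsupp.mem_support_iff]
    rw [key]; exact hx
  exact Set.infinite_of_injective_forall_mem hinj hmem ((a - b).coeff.support.finite_toSet)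

end Aux

theorem braid_general {k : Type*} [CommRing k] {n : ℕ} (p q r : Fin n)
    (hpq : p ≠ q) (hqr : q ≠ r) (hpr : p ≠ r)
    (D1 D2 : AddMonoidAlgebra k (Fin n →₀ ℤ) → AddMonoidAlgebra k (Fin n →₀ ℤ))
    (hD1 : ∀ f, (1 - mono (Finsupp.single p 1 + Finsupp.single q (-1))) * D1 f
        = f - swapVars p q f)
    (hD2 : ∀ f, (1 - mono (Finsupp.single q 1 + Finsupp.single r (-1))) * D2 f
        = f - swapVars q r f) :
    ∀ f, D1 (D2 (D1 f)) = D2 (D1 (D2 f)) := by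
  have s1 : Equiv.swap p q r = r := Equiv.swap_apply_of_ne_of_ne (Ne.symm hpr) (Ne.symm hqr)
  have s2 : Equiv.swap q r p = p := Equiv.swap_apply_of_ne_of_ne hpq hpr
  have A1 : Finsupp.equivMapDomain (Equiv.swap p q)
      (Finsupp.single p (1:ℤ) + Finsupp.single q (-1:ℤ))
      = -(Finsupp.single p (1:ℤ) + Finsupp.single q (-1:ℤ)) := by
    simp only [Finsupp.equivMapDomain_eq_mapDomain, Finsupp.mapDomain_add,
      Finsupp.mapDomain_single, Equiv.swap_apply_left, Equiv.swap_apply_right]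
    simp only [Finsupp.single_neg]
    abel
  have A2 : Finsupp.equivMapDomain (Equiv.swap p q)
      (Finsupp.single q (1:ℤ) + Finsupp.single r (-1:ℤ))
      = (Finsupp.single p (1:ℤ) + Finsupp.single q (-1:ℤ))
        + (Finsupp.single q (1:ℤ) + Finsupp.single r (-1:ℤ)) := by
    simp only [Finsupp.equivMapDomain_eq_mapDomain, Finsupp.mapDomain_add,
      Finsupp.mapDomain_single, Equiv.swap_apply_left, Equiv.swap_apply_right, s1]
    simp only [Finsupp.single_neg]
    abel
  have A3 : Finsupp.equivMapDomain (Equiv.swap q r)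
      (Finsupp.single p (1:ℤ) + Finsupp.single q (-1:ℤ))
      = (Finsupp.single p (1:ℤ) + Finsupp.single q (-1:ℤ))
        + (Finsupp.single q (1:ℤ) + Finsupp.single r (-1:ℤ)) := by
    simp only [Finsupp.equivMapDomain_eq_mapDomain, Finsupp.mapDomain_add,
      Finsupp.mapDomain_single, Equiv.swap_apply_left, Equiv.swap_apply_right, s2]
    simp only [Finsupp.single_neg]
    abel
  have A4 : Finsupp.equivMapDomain (Equiv.swap q r)
      (Finsupp.single q (1:ℤ) + Finsupp.single r (-1:ℤ))
      = -(Finsupp.single q (1:ℤ) + Finsupp.single r (-1:ℤ)) := by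
    simp only [Finsupp.equivMapDomain_eq_mapDomain, Finsupp.mapDomain_add,
      Finsupp.mapDomain_single, Equiv.swap_apply_left, Equiv.swap_apply_right]
    simp only [Finsupp.single_neg]
    abel
  have hv1ne : (Finsupp.single p (1:ℤ) + Finsupp.single q (-1:ℤ)) ≠ 0 := by
    intro h
    have h2 := DFunLike.congr_fun h p
    simp [Finsupp.single_apply, Ne.symm hpq] at h2
  have hv2ne : (Finsupp.single q (1:ℤ) + Finsupp.single r (-1:ℤ)) ≠ 0 := by
    intro h
    have h2 := DFunLike.congr_fun h q
    simp [Finsupp.single_apply, Ne.symm hqr] at h2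
  have hv12ne : ((Finsupp.single p (1:ℤ) + Finsupp.single q (-1:ℤ))
      + (Finsupp.single q (1:ℤ) + Finsupp.single r (-1:ℤ))) ≠ 0 := by
    intro h
    have h2 := DFunLike.congr_fun h p
    simp [Finsupp.single_apply, Ne.symm hpq, Ne.symm hpr] at h2
  refine demazure_braid_abstract (swapVarsHom k p q) (swapVarsHom k q r)
    (mono (Finsupp.single p 1 + Finsupp.single q (-1)))
    (mono (Finsupp.single q 1 + Finsupp.single r (-1)))
    (mono (-(Finsupp.single p 1 + Finsupp.single q (-1))))
    (mono (-(Finsupp.single q 1 + Finsupp.single r (-1))))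
    ?_ ?_ ?_ ?_ ?_ ?_ ?_ ?_ ?_ ?_ ?_ ?_ D1 D2 hD1 hD2
  · rw [mono_mul, add_neg_cancel, mono_zero]
  · rw [mono_mul, add_neg_cancel, mono_zero]
  · show swapVars p q _ = _
    rw [swapVars_mono, A1]
  · show swapVars p q _ = _
    rw [swapVars_mono, A2, ← mono_mul]
  · show swapVars q r _ = _
    rw [swapVars_mono, A3, ← mono_mul]
  · show swapVars q r _ = _
    rw [swapVars_mono, A4]
  · exact swapVars_swapVars p q
  · exact swapVars_swapVars q r
  · exact swapVars_braid hpq hqr hpr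
  · exact one_sub_mono_regular hv1ne
  · exact one_sub_mono_regular hv2ne
  · intro a b h
    rw [mono_mul] at h
    exact one_sub_mono_regular hv12ne a b h

/-- The braid relation `Δᵢ Δ_{i+1} Δᵢ = Δ_{i+1} Δᵢ Δ_{i+1}` for
Demazure operators on the Laurent polynomial ring. -/
theorem stmt8 {k : Type*} [CommRing k] {n : ℕ} (i : ℕ) (hi : i + 2 < n)
    (D1 D2 : AddMonoidAlgebra k (Fin n →₀ ℤ) → AddMonoidAlgebra k (Fin n →₀ ℤ))
    (hD1 : ∀ f,
      (1 - mono (Finsupp.single (⟨i, by omega⟩ : Fin n) 1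
          + Finsupp.single (⟨i + 1, by omega⟩ : Fin n) (-1))) * D1 f
        = f - swapVars ⟨i, by omega⟩ ⟨i + 1, by omega⟩ f)
    (hD2 : ∀ f,
      (1 - mono (Finsupp.single (⟨i + 1, by omega⟩ : Fin n) 1
          + Finsupp.single (⟨i + 2, hi⟩ : Fin n) (-1))) * D2 f
        = f - swapVars ⟨i + 1, by omega⟩ ⟨i + 2, hi⟩ f) :
    ∀ f, D1 (D2 (D1 f)) = D2 (D1 (D2 f)) := by
  refine braid_general (⟨i, by omega⟩ : Fin n) ⟨i + 1, by omega⟩ ⟨i + 2, hi⟩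
    ?_ ?_ ?_ D1 D2 hD1 hD2
  · intro h; rw [Fin.mk.injEq] at h; omega
  · intro h; rw [Fin.mk.injEq] at h; omega
  · intro h; rw [Fin.mk.injEq] at h; omega
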